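/- The double integral over the unit disc C = {x ∈ ℝ² : |x| < 1} given by (1/(4π)) ∫_C ∫_C 1/|x − y| dx dy equals 4/3. -/

import Mathlib

open MeasureTheory Real Set Metric MeasureTheory.Measure ENNReal

local notation "E2" => EuclideanSpace ℝ (Fin 2)

lemma radial_lintegral (f : ℝ → ℝ≥0∞) (hf : Measurable f) :
    ∫⁻ x : E2, f ‖x‖ = volume (ball (0:E2) 1) *
      (2 * ∫⁻ r in Ioi (0:ℝ), ENNReal.ofReal r * f r) := by
  have hdim : Module.finrank ℝ E2 = 2 := finrank_euclideanSpace_fin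
  have h0 : ∫⁻ x : E2, f ‖x‖ = ∫⁻ x in ({(0:E2)}ᶜ), f ‖x‖ := by
    rw [MeasureTheory.restrict_compl_singleton]
  rw [h0, ← lintegral_subtype_comap (measurableSet_singleton _).compl]
  have hg : Measurable fun p : sphere (0:E2) 1 × Ioi (0:ℝ) => f p.2.1 :=
    hf.comp (measurable_subtype_coe.comp measurable_snd)
  have h1 := (Measure.measurePreserving_homeomorphUnitSphereProd
    (volume : Measure E2)).lintegral_comp hg
  have h2 : (fun x : ({(0:E2)}ᶜ : Set E2) => f ‖x.1‖)
      = fun x => f (((homeomorphUnitSphereProd E2) x).2 : ℝ) := by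
    funext x; simp
  rw [h2, h1]
  rw [lintegral_prod _ hg.aemeasurable]
  simp only [lintegral_const]
  rw [Measure.toSphere_apply_univ, hdim]
  have h3 : ∫⁻ (y : ↑(Ioi (0:ℝ))), f ↑y ∂(Measure.volumeIoiPow (2 - 1))
      = ∫⁻ r in Ioi (0:ℝ), ENNReal.ofReal r * f r := by
    rw [Measure.volumeIoiPow,
      lintegral_withDensity_eq_lintegral_mul _
        (by exact (ENNReal.measurable_ofReal.comp ((measurable_id.pow_const 1).comp
          measurable_subtype_coe))) (show Measurable fun y : Ioi (0:ℝ) => f ↑y from hf.comp measurable_subtype_coe),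
      ]
    simp only [Pi.mul_apply, Nat.reduceSub, pow_one]
    exact lintegral_subtype_comap measurableSet_Ioi fun x => ENNReal.ofReal x * f x
  rw [h3]
  push_cast
  ring

lemma sq_lt_iff_mem (c t : ℝ) : c^2 < t ↔ c ∈ Ioo (-Real.sqrt t) (Real.sqrt t) := by
  rcases le_or_gt t 0 with h | h
  · constructor
    · intro hc; nlinarith [sq_nonneg c]
    · intro hc
      rw [Real.sqrt_eq_zero'.mpr h] at hc
      simp only [mem_Ioo, neg_zero] at hc
      exact absurd hc.2 (not_lt.mpr hc.1.le)
  · rw [mem_Ioo, ← abs_lt, ← sq_abs c]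
    exact (Real.lt_sqrt (abs_nonneg c)).symm

lemma norm_lt_one_iff (x : EuclideanSpace ℝ (Fin 2)) :
    ‖x‖ < 1 ↔ (x 0)^2 + (x 1)^2 < 1 := by
  rw [EuclideanSpace.norm_eq]
  rw [show (1:ℝ) = Real.sqrt 1 from (Real.sqrt_one).symm]
  rw [Real.sqrt_lt_sqrt_iff (by positivity)]
  simp [Fin.sum_univ_two, sq_abs]

noncomputable def e2 : EuclideanSpace ℝ (Fin 2) := EuclideanSpace.single (1 : Fin 2) (1:ℝ)

lemma lens_area (r : ℝ) (hr : 0 ≤ r) :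
    volume {x : EuclideanSpace ℝ (Fin 2) | ‖x‖ < 1 ∧ ‖x - r • e2‖ < 1}
      = ∫⁻ a : ℝ, ENNReal.ofReal (2 * Real.sqrt (1 - a^2) - r) := by
  set T : Set (ℝ × ℝ) := {p | p.1^2 + p.2^2 < 1 ∧ p.1^2 + (p.2 - r)^2 < 1} with hTdef
  have hTopen : IsOpen T := by
    have : T = {p : ℝ × ℝ | p.1^2 + p.2^2 < 1} ∩ {p : ℝ × ℝ | p.1^2 + (p.2 - r)^2 < 1} := rfl
    rw [this]
    exact IsOpen.inter
      (isOpen_lt (((continuous_fst.pow 2)).add ((continuous_snd.pow 2))) continuous_const)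
      (isOpen_lt (((continuous_fst.pow 2)).add (((continuous_snd.sub continuous_const).pow 2)))
        continuous_const)
  have hT : MeasurableSet T := hTopen.measurableSet
  set ψ := (MeasurableEquiv.toLp 2 (Fin 2 → ℝ)).symm
  set χ := @MeasurableEquiv.finTwoArrow ℝ _
  have hset : {x : EuclideanSpace ℝ (Fin 2) | ‖x‖ < 1 ∧ ‖x - r • e2‖ < 1}
      = ψ ⁻¹' (χ ⁻¹' T) := by
    ext x
    simp only [mem_preimage, mem_setOf_eq, hTdef, ψ, χ, MeasurableEquiv.finTwoArrow,
      MeasurableEquiv.coe_toLp_symm]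
    have h0 : (x - r • e2) 0 = x 0 := by
      simp [e2, EuclideanSpace.single_apply]
    have h1 : (x - r • e2) 1 = x 1 - r := by
      simp [e2, EuclideanSpace.single_apply]
    rw [norm_lt_one_iff, norm_lt_one_iff, h0, h1]
    simp [finTwoArrowEquiv]
  rw [hset, (EuclideanSpace.volume_preserving_symm_measurableEquiv_toLp (Fin 2)).measure_preimage
    ((χ.measurable hT).nullMeasurableSet),
    (volume_preserving_finTwoArrow ℝ).measure_preimage hT.nullMeasurableSet]
  rw [volume_eq_prod, Measure.prod_apply hT]
  have hslice : ∀ a : ℝ, Prod.mk a ⁻¹' T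
      = Ioo (r - Real.sqrt (1 - a^2)) (Real.sqrt (1 - a^2)) := by
    intro a
    ext b
    set s := Real.sqrt (1 - a^2) with hs
    have hs0 : 0 ≤ s := Real.sqrt_nonneg _
    simp only [mem_preimage, mem_setOf_eq, hTdef, mem_Ioo]
    have h1 : a^2 + b^2 < 1 ↔ b ∈ Ioo (-s) s := by
      rw [← sq_lt_iff_mem]; constructor <;> intro <;> nlinarith
    have h2 : a^2 + (b - r)^2 < 1 ↔ (b - r) ∈ Ioo (-s) s := by
      rw [← sq_lt_iff_mem]; constructor <;> intro <;> nlinarith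
    rw [h1, h2]
    simp only [mem_Ioo]
    constructor
    · rintro ⟨⟨h3, h4⟩, h5, h6⟩; exact ⟨by linarith, h4⟩
    · rintro ⟨h3, h4⟩; exact ⟨⟨by linarith, h4⟩, ⟨by linarith, by linarith⟩⟩
  simp only [hslice, Real.volume_Ioo]
  congr 1
  funext a
  congr 1
  ring

lemma lintegral_triangle (c : ℝ) (hc : 0 ≤ c) :
    ∫⁻ r in Ioi (0:ℝ), ENNReal.ofReal (c - r) = ENNReal.ofReal (c^2/2) := by
  rw [← Ioc_union_Ioi_eq_Ioi hc,
    lintegral_union measurableSet_Ioi (Ioc_disjoint_Ioi le_rfl)]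
  have h2 : ∫⁻ r in Ioi c, ENNReal.ofReal (c - r) = 0 := by
    rw [setLIntegral_congr_fun measurableSet_Ioi
      (fun r (hr : r ∈ Ioi c) => ?_), lintegral_zero]
    rw [mem_Ioi] at hr
    exact ENNReal.ofReal_eq_zero.mpr (by linarith)
  have h1 : ∫⁻ r in Ioc (0:ℝ) c, ENNReal.ofReal (c - r) = ENNReal.ofReal (c^2/2) := by
    rw [← ofReal_integral_eq_lintegral_ofReal]
    · congr 1
      rw [← intervalIntegral.integral_of_le hc,
        intervalIntegral.integral_sub intervalIntegrable_const
          intervalIntegral.intervalIntegrable_id,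
        intervalIntegral.integral_const, integral_id]
      simp; ring
    · exact (continuous_const.sub continuous_id).integrableOn_Ioc
    · filter_upwards [ae_restrict_mem measurableSet_Ioc] with r hr
      simp only [Pi.zero_apply]
      linarith [hr.2]
  rw [h1, h2, add_zero]

lemma lintegral_parabola : ∫⁻ a : ℝ, ENNReal.ofReal (2*(1 - a^2)) = ENNReal.ofReal (8/3) := by
  rw [← lintegral_add_compl (fun a => ENNReal.ofReal (2*(1 - a^2)))
    (measurableSet_Ioc (a := (-1:ℝ)) (b := (1:ℝ)))]
  have h2 : ∫⁻ a in (Ioc (-1:ℝ) 1)ᶜ, ENNReal.ofReal (2*(1 - a^2)) = 0 := by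
    rw [setLIntegral_congr_fun measurableSet_Ioc.compl
      (fun a ha => ?_), lintegral_zero]
    simp only [mem_compl_iff, mem_Ioc, not_and_or, not_lt, not_le] at ha
    refine ENNReal.ofReal_eq_zero.mpr ?_
    rcases ha with h | h <;> nlinarith
  have h1 : ∫⁻ a in Ioc (-1:ℝ) 1, ENNReal.ofReal (2*(1 - a^2))
      = ENNReal.ofReal (8/3) := by
    rw [← ofReal_integral_eq_lintegral_ofReal]
    · congr 1
      rw [← intervalIntegral.integral_of_le (by norm_num : (-1:ℝ) ≤ 1)]
      have : (fun a : ℝ => 2*(1 - a^2)) = fun a : ℝ => 2 - 2*a^2 := by funext a; ring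
      rw [this, intervalIntegral.integral_sub intervalIntegrable_const
        ((intervalIntegral.intervalIntegrable_pow 2).const_mul 2),
        intervalIntegral.integral_const, intervalIntegral.integral_const_mul,
        integral_pow]
      norm_num
    · exact (continuous_const.mul (continuous_const.sub (continuous_pow 2))).integrableOn_Ioc
    · filter_upwards [ae_restrict_mem measurableSet_Ioc] with a ha
      simp only [Pi.zero_apply]
      nlinarith [ha.1, ha.2]
  rw [h1, h2, add_zero]

lemma akey : (∫⁻ r in Ioi (0:ℝ), ∫⁻ a : ℝ, ENNReal.ofReal (2*Real.sqrt (1 - a^2) - r))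
    = ENNReal.ofReal (8/3) := by
  rw [lintegral_lintegral_swap]
  · have inner : ∀ a : ℝ, (∫⁻ r in Ioi (0:ℝ), ENNReal.ofReal (2*Real.sqrt (1 - a^2) - r))
        = ENNReal.ofReal (2*(1 - a^2)) := by
      intro a
      rw [lintegral_triangle _ (by positivity)]
      rcases le_or_gt 0 (1 - a^2) with h | h
      · congr 1
        rw [mul_pow, Real.sq_sqrt h]
        ring
      · rw [Real.sqrt_eq_zero'.mpr h.le]
        norm_num
        nlinarith [abs_mul_abs_self a, abs_nonneg a]
    rw [lintegral_congr inner, lintegral_parabola]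
  · apply Measurable.aemeasurable
    apply ENNReal.measurable_ofReal.comp
    fun_prop

lemma rotate_lens (z : EuclideanSpace ℝ (Fin 2)) :
    volume {x : EuclideanSpace ℝ (Fin 2) | ‖x‖ < 1 ∧ ‖x - z‖ < 1}
      = volume {x : EuclideanSpace ℝ (Fin 2) | ‖x‖ < 1 ∧ ‖x - ‖z‖ • e2‖ < 1} := by
  set w : EuclideanSpace ℝ (Fin 2) := ‖z‖ • e2 with hwdef
  have hw : ‖z‖ = ‖w‖ := by
    rw [hwdef, norm_smul, e2, EuclideanSpace.norm_single]
    simp [abs_of_nonneg (norm_nonneg z)]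
  set T := Submodule.reflection (ℝ ∙ (z - w))ᗮ with hTdef
  have hTz : T z = w := Submodule.reflection_sub hw
  have hopen : IsOpen {x : EuclideanSpace ℝ (Fin 2) | ‖x‖ < 1 ∧ ‖x - w‖ < 1} := by
    have : {x : EuclideanSpace ℝ (Fin 2) | ‖x‖ < 1 ∧ ‖x - w‖ < 1}
        = {x : EuclideanSpace ℝ (Fin 2) | ‖x‖ < 1} ∩ {x | ‖x - w‖ < 1} := rfl
    rw [this]
    exact IsOpen.inter (isOpen_lt continuous_norm continuous_const)
      (isOpen_lt ((continuous_id.sub continuous_const).norm) continuous_const)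
  have hpre : T ⁻¹' {x : EuclideanSpace ℝ (Fin 2) | ‖x‖ < 1 ∧ ‖x - w‖ < 1}
      = {x : EuclideanSpace ℝ (Fin 2) | ‖x‖ < 1 ∧ ‖x - z‖ < 1} := by
    ext x
    simp only [mem_preimage, mem_setOf_eq]
    rw [T.norm_map, ← hTz, ← map_sub, T.norm_map]
  rw [← hpre, T.measurePreserving.measure_preimage hopen.measurableSet.nullMeasurableSet]

lemma ball_area : volume (Metric.ball (0 : EuclideanSpace ℝ (Fin 2)) 1) = ENNReal.ofReal π := by
  rw [InnerProductSpace.volume_ball]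
  simp only [finrank_euclideanSpace_fin]
  norm_num [Real.sq_sqrt pi_pos.le, Real.Gamma_two]

lemma main_lintegral :
    (∫⁻ x in {x : EuclideanSpace ℝ (Fin 2) | ‖x‖ < 1},
      ∫⁻ y in {y : EuclideanSpace ℝ (Fin 2) | ‖y‖ < 1}, ENNReal.ofReal ((dist x y)⁻¹))
      = ENNReal.ofReal π * (2 * ENNReal.ofReal (8/3)) := by
  set C : Set (EuclideanSpace ℝ (Fin 2)) := {x | ‖x‖ < 1} with hCdef
  have hCopen : IsOpen C := isOpen_lt continuous_norm continuous_const
  have hC : MeasurableSet C := hCopen.measurableSet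
  -- Step 1: rewrite inner integral by translation
  have step1 : ∀ x : EuclideanSpace ℝ (Fin 2),
      (∫⁻ y in C, ENNReal.ofReal ((dist x y)⁻¹))
        = ∫⁻ z, C.indicator 1 (x - z) * ENNReal.ofReal (‖z‖⁻¹) := by
    intro x
    have hmeasg : Measurable (C.indicator fun y => ENNReal.ofReal ((dist x y)⁻¹)) :=
      (ENNReal.measurable_ofReal.comp
        ((continuous_const.dist continuous_id).measurable.inv)).indicator hC
    rw [← lintegral_indicator hC,
      ← (measurePreserving_sub_left volume x).lintegral_comp hmeasg]
    apply lintegral_congr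
    intro z
    have hd : dist x (x - z) = ‖z‖ := by
      rw [dist_eq_norm]
      congr 1
      abel
    by_cases h : x - z ∈ C
    · rw [Set.indicator_of_mem h, Set.indicator_of_mem h, hd, Pi.one_apply, one_mul]
    · rw [Set.indicator_of_notMem h, Set.indicator_of_notMem h, zero_mul]
  rw [lintegral_congr fun x => step1 x]
  -- Step 2: swap the integrals
  have hmeasK : Measurable (fun p : EuclideanSpace ℝ (Fin 2) × EuclideanSpace ℝ (Fin 2) =>
      C.indicator 1 (p.1 - p.2) * ENNReal.ofReal (‖p.2‖⁻¹)) :=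
    ((measurable_one.indicator hC).comp (measurable_fst.sub measurable_snd)).mul
      (ENNReal.measurable_ofReal.comp ((measurable_norm.comp measurable_snd).inv))
  rw [lintegral_lintegral_swap hmeasK.aemeasurable]
  -- Step 3: inner integral over x is a lens volume
  have step3 : ∀ z : EuclideanSpace ℝ (Fin 2),
      (∫⁻ x in C, C.indicator 1 (x - z) * ENNReal.ofReal (‖z‖⁻¹))
        = ENNReal.ofReal (‖z‖⁻¹) * volume {x : EuclideanSpace ℝ (Fin 2) | ‖x‖ < 1 ∧ ‖x - z‖ < 1} := by
    intro z
    have hS : MeasurableSet {x : EuclideanSpace ℝ (Fin 2) | x - z ∈ C} :=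
      (measurable_id.sub measurable_const) hC
    have hind : ∀ x : EuclideanSpace ℝ (Fin 2),
        C.indicator 1 (x - z) = Set.indicator {x : EuclideanSpace ℝ (Fin 2) | x - z ∈ C}
          (1 : EuclideanSpace ℝ (Fin 2) → ℝ≥0∞) x := by
      intro x
      simp only [Set.indicator_apply, mem_setOf_eq, Pi.one_apply]
    calc (∫⁻ x in C, C.indicator 1 (x - z) * ENNReal.ofReal (‖z‖⁻¹))
        = (∫⁻ x in C, Set.indicator {x : EuclideanSpace ℝ (Fin 2) | x - z ∈ C} 1 x)
            * ENNReal.ofReal (‖z‖⁻¹) := by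
          rw [← lintegral_mul_const _ (measurable_one.indicator hS)]
          exact lintegral_congr fun x => by rw [hind x]
      _ = volume ({x : EuclideanSpace ℝ (Fin 2) | x - z ∈ C} ∩ C) * ENNReal.ofReal (‖z‖⁻¹) := by
          rw [lintegral_indicator_one hS, Measure.restrict_apply hS]
      _ = ENNReal.ofReal (‖z‖⁻¹)
            * volume {x : EuclideanSpace ℝ (Fin 2) | ‖x‖ < 1 ∧ ‖x - z‖ < 1} := by
          rw [mul_comm]
          have hseteq : {x : EuclideanSpace ℝ (Fin 2) | x - z ∈ C} ∩ C
              = {x : EuclideanSpace ℝ (Fin 2) | ‖x‖ < 1 ∧ ‖x - z‖ < 1} := by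
            ext x
            simp only [mem_inter_iff, mem_setOf_eq, hCdef]
            exact and_comm
          rw [hseteq]
  rw [lintegral_congr fun z => step3 z]
  -- Step 4: rewrite as a radial function
  set g : ℝ → ℝ≥0∞ := fun r => ENNReal.ofReal (r⁻¹)
    * ∫⁻ a : ℝ, ENNReal.ofReal (2 * Real.sqrt (1 - a^2) - r) with hgdef
  have hg : Measurable g := by
    apply Measurable.mul
    · exact ENNReal.measurable_ofReal.comp measurable_inv
    · exact Measurable.lintegral_prod_right'
        (f := fun p : ℝ × ℝ => ENNReal.ofReal (2 * Real.sqrt (1 - p.2^2) - p.1))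
        (ENNReal.measurable_ofReal.comp (by fun_prop))
  have step4 : ∀ z : EuclideanSpace ℝ (Fin 2),
      ENNReal.ofReal (‖z‖⁻¹) * volume {x : EuclideanSpace ℝ (Fin 2) | ‖x‖ < 1 ∧ ‖x - z‖ < 1}
        = g ‖z‖ := by
    intro z
    by_cases hz : z = 0
    · rw [hz, hgdef]
      simp
    · rw [hgdef, rotate_lens z, lens_area ‖z‖ (norm_nonneg z)]
  rw [lintegral_congr fun z => step4 z, radial_lintegral g hg, ball_area]
  congr 1
  congr 1
  rw [setLIntegral_congr_fun measurableSet_Ioi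
    (fun r (hr : r ∈ Ioi (0:ℝ)) => ?_), akey]
  rw [mem_Ioi] at hr
  rw [hgdef, ← mul_assoc, ← ENNReal.ofReal_mul hr.le, mul_inv_cancel₀ hr.ne',
    ENNReal.ofReal_one, one_mul]

theorem disc_energy_const :
    (1 / (4 * π)) *
      ∫ x in {x : EuclideanSpace ℝ (Fin 2) | ‖x‖ < 1},
        ∫ y in {y : EuclideanSpace ℝ (Fin 2) | ‖y‖ < 1}, 1 / dist x y = 4 / 3 := by
  have hC : MeasurableSet {x : EuclideanSpace ℝ (Fin 2) | ‖x‖ < 1} :=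
    (isOpen_lt continuous_norm continuous_const).measurableSet
  set Lin : EuclideanSpace ℝ (Fin 2) → ℝ≥0∞ := fun x =>
    ∫⁻ y in {y : EuclideanSpace ℝ (Fin 2) | ‖y‖ < 1}, ENNReal.ofReal ((dist x y)⁻¹) with hLindef
  have hker : Measurable (fun p : EuclideanSpace ℝ (Fin 2) × EuclideanSpace ℝ (Fin 2) =>
      ENNReal.ofReal ((dist p.1 p.2)⁻¹)) :=
    ENNReal.measurable_ofReal.comp measurable_dist.inv
  have hLin : Measurable Lin := Measurable.lintegral_prod_right'
    (f := fun p : EuclideanSpace ℝ (Fin 2) × EuclideanSpace ℝ (Fin 2) =>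
      ENNReal.ofReal ((dist p.1 p.2)⁻¹)) hker
  have hinner : ∀ x : EuclideanSpace ℝ (Fin 2),
      (∫ y in {y : EuclideanSpace ℝ (Fin 2) | ‖y‖ < 1}, 1 / dist x y) = (Lin x).toReal := by
    intro x
    have h1 : (fun y : EuclideanSpace ℝ (Fin 2) => 1 / dist x y)
        = fun y => (dist x y)⁻¹ := funext fun y => one_div _
    have hm : AEStronglyMeasurable (fun y : EuclideanSpace ℝ (Fin 2) => (dist x y)⁻¹)
        (volume.restrict {y : EuclideanSpace ℝ (Fin 2) | ‖y‖ < 1}) :=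
      (Measurable.inv (by fun_prop)).aestronglyMeasurable
    rw [h1, integral_eq_lintegral_of_nonneg_ae
      (ae_of_all _ fun y => inv_nonneg.mpr dist_nonneg) hm]
  have hfin : (∫⁻ x in {x : EuclideanSpace ℝ (Fin 2) | ‖x‖ < 1}, Lin x) ≠ ∞ := by
    rw [hLindef, main_lintegral]
    exact ENNReal.mul_ne_top ENNReal.ofReal_ne_top
      (ENNReal.mul_ne_top (by simp) ENNReal.ofReal_ne_top)
  have houter : (∫ x in {x : EuclideanSpace ℝ (Fin 2) | ‖x‖ < 1},
      ∫ y in {y : EuclideanSpace ℝ (Fin 2) | ‖y‖ < 1}, 1 / dist x y)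
      = (∫⁻ x in {x : EuclideanSpace ℝ (Fin 2) | ‖x‖ < 1}, Lin x).toReal := by
    rw [show (fun x : EuclideanSpace ℝ (Fin 2) =>
        ∫ y in {y : EuclideanSpace ℝ (Fin 2) | ‖y‖ < 1}, 1 / dist x y)
        = fun x => (Lin x).toReal from funext hinner]
    rw [integral_eq_lintegral_of_nonneg_ae (ae_of_all _ fun x => ENNReal.toReal_nonneg)
      hLin.ennreal_toReal.aestronglyMeasurable]
    congr 1
    apply lintegral_congr_ae
    filter_upwards [ae_lt_top hLin hfin] with x hx
    rw [ENNReal.ofReal_toReal hx.ne]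
  rw [houter, hLindef, main_lintegral, ENNReal.toReal_mul, ENNReal.toReal_mul,
    ENNReal.toReal_ofReal pi_pos.le, ENNReal.toReal_ofReal (by norm_num : (0:ℝ) ≤ 8/3),
    ENNReal.toReal_ofNat]
  field_simp
  ring
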